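/- Let n ≥ 1 and let η be a partition of 2n in which every odd part occurs with even multiplicity (a symplectic partition), with dual partition η̂ = (η̂₁,…,η̂_s), s = η₁. Then (1/2)(Σ_{i=1}^{s} η̂ᵢ² + o(η)) + 2⌊s/2⌋ − 3n ≥ 0, and equality holds if and only if η has at most two parts (equivalently η̂₁ ≤ 2). -/
import Mathlib


lemma mySupMem : ∀ (m : Multiset ℕ), m ≠ 0 → m.sup ∈ m := by
  intro m
  induction m using Multiset.induction with
  | empty => simp
  | cons a m ih =>
    intro _
    rcases eq_or_ne m 0 with rfl | h
    · simp
    · rw [Multiset.sup_cons]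
      rcases le_total a m.sup with h2 | h2
      · rw [sup_eq_right.mpr h2]; exact Multiset.mem_cons_of_mem (ih h)
      · rw [sup_eq_left.mpr h2]; exact Multiset.mem_cons_self a m

lemma mySumDual (s : ℕ) : ∀ (m : Multiset ℕ), (∀ j ∈ m, j ≤ s) →
    ∑ i ∈ Finset.Icc 1 s, (m.filter (fun j => i ≤ j)).card = m.sum := by
  intro m
  induction m using Multiset.induction with
  | empty => simp
  | cons a m ih =>
    intro h
    have ha : a ≤ s := h a (Multiset.mem_cons_self a m)
    have hm : ∀ j ∈ m, j ≤ s := fun j hj => h j (Multiset.mem_cons_of_mem hj)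
    have hcard : ∀ i, ((a ::ₘ m).filter (fun j => i ≤ j)).card
        = (if i ≤ a then 1 else 0) + (m.filter (fun j => i ≤ j)).card := by
      intro i
      rw [Multiset.filter_cons]
      split <;> simp [Nat.add_comm]
    have hone : ∑ i ∈ Finset.Icc 1 s, (if i ≤ a then 1 else 0) = a := by
      rw [← Finset.sum_filter]
      have : Finset.filter (fun i => i ≤ a) (Finset.Icc 1 s) = Finset.Icc 1 a := by
        ext i; simp only [Finset.mem_filter, Finset.mem_Icc]; omega
      simp [this]
    simp only [hcard, Multiset.sum_cons, Finset.sum_add_distrib, ih hm, hone]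

lemma myPt (c : ℕ) (h : 1 ≤ c) : c ^ 2 + 2 = 3 * c + (c - 1) * (c - 2) := by
  rcases c with _ | c
  · omega
  rcases c with _ | c
  · rfl
  · show (c + 2) ^ 2 + 2 = 3 * (c + 2) + (c + 1) * c
    ring


/-- The `i`-th entry of the dual partition: `η̂ᵢ = #{j : η_j ≥ i}` (parts counted with
multiplicity). -/
def dualPart {N : ℕ} (η : Nat.Partition N) (i : ℕ) : ℕ :=
  (η.parts.filter (fun j => i ≤ j)).card

/-- The number `o(η)` of odd parts of a partition. -/
def oddCount {N : ℕ} (η : Nat.Partition N) : ℕ :=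
  (η.parts.filter (fun j => Odd j)).card

/-- the case `g = sp_{2n}`. Let `n ≥ 1` and let `η` be a symplectic
partition of `2n` (every odd part occurs with even multiplicity), with dual partition
`η̂ = (η̂₁,…,η̂_s)`, `s = η₁`. Then
`(1/2)(Σ η̂ᵢ² + o(η)) + 2⌊s/2⌋ − 3n ≥ 0`, with equality iff `η` has at most two parts
(equivalently `η̂₁ ≤ 2`). -/
theorem sp_inequality (n : ℕ) (hn : 1 ≤ n) (η : Nat.Partition (2 * n))
    (hsymp : ∀ j : ℕ, Odd j → Even (Multiset.count j η.parts)) :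
    (0 ≤ (1 / 2 : ℚ) * ((∑ i ∈ Finset.Icc 1 η.parts.sup, (dualPart η i : ℚ) ^ 2)
          + (oddCount η : ℚ))
        + 2 * ((η.parts.sup / 2 : ℕ) : ℚ) - 3 * (n : ℚ)) ∧
    ((1 / 2 : ℚ) * ((∑ i ∈ Finset.Icc 1 η.parts.sup, (dualPart η i : ℚ) ^ 2)
          + (oddCount η : ℚ))
        + 2 * ((η.parts.sup / 2 : ℕ) : ℚ) - 3 * (n : ℚ) = 0 ↔
      Multiset.card η.parts ≤ 2) := by
  set s := η.parts.sup with hs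
  have hpne : η.parts ≠ 0 := by
    intro h
    have h2 := η.parts_sum
    rw [h] at h2
    simp at h2
    omega
  have hsup : s ∈ η.parts := mySupMem _ hpne
  have hs1 : 1 ≤ s := η.parts_pos hsup
  have hle : ∀ j ∈ η.parts, j ≤ s := fun j hj => Multiset.le_sup hj
  have hA : ∑ i ∈ Finset.Icc 1 s, dualPart η i = 2 * n := by
    have := mySumDual s η.parts hle
    simpa [dualPart, η.parts_sum] using this
  have hB : ∀ i ∈ Finset.Icc 1 s, 1 ≤ dualPart η i := by
    intro i hi
    rw [Finset.mem_Icc] at hi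
    have hmem : s ∈ η.parts.filter (fun j => i ≤ j) :=
      Multiset.mem_filter.mpr ⟨hsup, hi.2⟩
    exact Multiset.card_pos_iff_exists_mem.mpr ⟨s, hmem⟩
  have hc1 : dualPart η 1 = Multiset.card η.parts := by
    unfold dualPart
    congr 1
    rw [Multiset.filter_eq_self]
    exact fun j hj => η.parts_pos hj
  have hcle : ∀ i, dualPart η i ≤ Multiset.card η.parts :=
    fun i => Multiset.card_le_card (Multiset.filter_le _ _)
  have hocard : oddCount η ≤ Multiset.card η.parts :=
    Multiset.card_le_card (Multiset.filter_le _ _)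
  set Q := ∑ i ∈ Finset.Icc 1 s, dualPart η i ^ 2 with hQ
  set P := ∑ i ∈ Finset.Icc 1 s, (dualPart η i - 1) * (dualPart η i - 2) with hP
  have key : Q + 2 * s = 6 * n + P := by
    have h1 : ∑ i ∈ Finset.Icc 1 s, (dualPart η i ^ 2 + 2)
        = ∑ i ∈ Finset.Icc 1 s,
            (3 * dualPart η i + (dualPart η i - 1) * (dualPart η i - 2)) :=
      Finset.sum_congr rfl (fun i hi => myPt _ (hB i hi))
    rw [Finset.sum_add_distrib, Finset.sum_add_distrib, ← Finset.mul_sum, hA, ← hQ, ← hP] at h1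
    simp only [Finset.sum_const, Nat.card_Icc, smul_eq_mul] at h1
    omega
  have hodd2 : Odd s → 2 ≤ oddCount η := by
    intro hso
    have h1 : Multiset.count s η.parts ≤ oddCount η := by
      have h2 := Multiset.count_le_card s (η.parts.filter (fun j => Odd j))
      rwa [Multiset.count_filter_of_pos hso] at h2
    have h3 : 1 ≤ Multiset.count s η.parts := Multiset.one_le_count_iff_mem.mpr hsup
    obtain ⟨k, hk⟩ := hsymp s hso
    omega
  have hzero : Even s → Multiset.card η.parts ≤ 2 → oddCount η = 0 := by
    intro hse hcard
    by_contra ho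
    obtain ⟨a, ha⟩ := Multiset.card_pos_iff_exists_mem.mp (Nat.pos_of_ne_zero ho)
    rw [Multiset.mem_filter] at ha
    obtain ⟨ham, hao⟩ := ha
    have h2 : 2 ≤ Multiset.count a η.parts := by
      have h1 : 1 ≤ Multiset.count a η.parts := Multiset.one_le_count_iff_mem.mpr ham
      obtain ⟨k, hk⟩ := hsymp a hao
      omega
    have hrep : Multiset.replicate 2 a ≤ η.parts :=
      Multiset.le_count_iff_replicate_le.mp h2
    have heq : η.parts = Multiset.replicate 2 a := by
      symm
      apply Multiset.eq_of_le_of_card_le hrep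
      simpa using hcard
    have hsa : s = a := by
      rw [hs, heq]
      simp [Multiset.replicate_succ]
    rw [hsa] at hse
    exact (Nat.not_odd_iff_even.mpr hse) hao
  have hfo : 2 * s ≤ oddCount η + 4 * (s / 2) := by
    rcases Nat.even_or_odd s with he | ho
    · obtain ⟨k, hk⟩ := he; omega
    · have := hodd2 ho; obtain ⟨k, hk⟩ := ho; omega
  have hforward : Q + oddCount η + 4 * (s / 2) = 6 * n → Multiset.card η.parts ≤ 2 := by
    intro heq
    have hP0 : P = 0 := by omega
    rw [hP] at hP0
    have h1 := (Finset.sum_eq_zero_iff).mp hP0 1 (Finset.mem_Icc.mpr ⟨le_refl 1, hs1⟩)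
    have h2 := hB 1 (Finset.mem_Icc.mpr ⟨le_refl 1, hs1⟩)
    rw [hc1] at h1 h2
    rcases Nat.mul_eq_zero.mp h1 with h | h <;> omega
  have hbackward : Multiset.card η.parts ≤ 2 → Q + oddCount η + 4 * (s / 2) = 6 * n := by
    intro hcard
    have hP0 : P = 0 := by
      rw [hP]
      apply Finset.sum_eq_zero
      intro i hi
      have h1 := hB i hi
      have h2 := le_trans (hcle i) hcard
      have h3 : dualPart η i = 1 ∨ dualPart η i = 2 := by omega
      rcases h3 with h | h <;> rw [h] <;> rfl
    have hfo2 : oddCount η + 4 * (s / 2) = 2 * s := by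
      rcases Nat.even_or_odd s with he | ho
      · have h0 := hzero he hcard
        obtain ⟨k, hk⟩ := he
        omega
      · have h2 := hodd2 ho
        have h3 : oddCount η ≤ 2 := le_trans hocard hcard
        obtain ⟨k, hk⟩ := ho
        omega
    omega
  have hcast : ∑ i ∈ Finset.Icc 1 s, (dualPart η i : ℚ) ^ 2 = (Q : ℚ) := by
    rw [hQ]
    push_cast
    rfl
  have hN : 6 * n ≤ Q + oddCount η + 4 * (s / 2) := by omega
  constructor
  · have h1 : (6 : ℚ) * n ≤ (Q : ℚ) + (oddCount η : ℚ) + 4 * ((s / 2 : ℕ) : ℚ) := by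
      exact_mod_cast hN
    rw [hcast]
    linarith
  · rw [hcast]
    constructor
    · intro h
      apply hforward
      have h1 : (Q : ℚ) + (oddCount η : ℚ) + 4 * ((s / 2 : ℕ) : ℚ) = 6 * n := by linarith
      exact_mod_cast h1
    · intro h
      have h1 := hbackward h
      have h2 : (Q : ℚ) + (oddCount η : ℚ) + 4 * ((s / 2 : ℕ) : ℚ) = 6 * n := by
        exact_mod_cast h1
      linarith
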